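/- arXiv:1811.08205 — 4 statements merged into one kernel-verified Lean document; each statement's English description precedes it below -/
import Mathlib

section
/- For any n and t with t ≤ n/2, there exists a family F of t-element subsets of {1,...,n} with |F| ≥ (n/(4t))^(t/4) such that any two distinct sets S, S' in F satisfy |S ∩ S'| < t/2. -/
lemma aux_step (n t m s : ℕ) (ht : 0 < t) (hs : 0 < s) (hm : 0 < m) (hns : n * s ≤ m * t) :
    ((n:ℝ)/t) * ((m-1).choose (s-1) : ℝ) ≤ (m.choose s : ℝ) := by
  have hid : m * (m-1).choose (s-1) = m.choose s * s := by
    have := Nat.add_one_mul_choose_eq (m - 1) (s - 1)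
    have h1 : m - 1 + 1 = m := by omega
    have h2 : s - 1 + 1 = s := by omega
    rwa [h1, h2] at this
  have hnat : n * (m-1).choose (s-1) ≤ m.choose s * t := by
    have h3 : n * (m-1).choose (s-1) * s ≤ m.choose s * t * s := by
      calc n * (m-1).choose (s-1) * s = (n * s) * (m-1).choose (s-1) := by ring
        _ ≤ (m * t) * (m-1).choose (s-1) := Nat.mul_le_mul_right _ hns
        _ = t * (m * (m-1).choose (s-1)) := by ring
        _ = m.choose s * t * s := by rw [hid]; ring
    exact Nat.le_of_mul_le_mul_right h3 hs
  rw [div_mul_eq_mul_div, div_le_iff₀ (by exact_mod_cast ht)]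
  exact_mod_cast hnat

lemma aux_ratio (n t : ℕ) (ht : 0 < t) (htn : t ≤ n) :
    ∀ j, j ≤ t → ((n:ℝ)/t)^j * ((n-j).choose (t-j) : ℝ) ≤ (n.choose t : ℝ) := by
  intro j hj
  induction j with
  | zero => simp
  | succ j ih =>
    have hstep : ((n:ℝ)/t) * ((n - (j+1)).choose (t - (j+1)) : ℝ) ≤ ((n-j).choose (t-j) : ℝ) := by
      have h1 : n - (j+1) = (n - j) - 1 := by omega
      have h2 : t - (j+1) = (t - j) - 1 := by omega
      rw [h1, h2]
      exact aux_step n t (n-j) (t-j) ht (by omega) (by omega)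
        (by zify [(by omega : j ≤ t), (by omega : j ≤ n)]; nlinarith [htn, hj])
    calc ((n:ℝ)/t)^(j+1) * ((n-(j+1)).choose (t-(j+1)) : ℝ)
        = ((n:ℝ)/t)^j * (((n:ℝ)/t) * ((n-(j+1)).choose (t-(j+1)) : ℝ)) := by ring
      _ ≤ ((n:ℝ)/t)^j * ((n-j).choose (t-j) : ℝ) := by
          apply mul_le_mul_of_nonneg_left hstep (by positivity)
      _ ≤ (n.choose t : ℝ) := ih (by omega)

lemma aux_supersets (n t k : ℕ) (A : Finset (Fin n)) (hA : A.card = k) :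
    ((Finset.univ.powersetCard t).filter (fun T => A ⊆ T)).card ≤ (n - k).choose (t - k) := by
  have : ((Finset.univ.powersetCard t).filter (fun T => A ⊆ T)).card
      ≤ ((Finset.univ \ A).powersetCard (t - k)).card := by
    apply Finset.card_le_card_of_injOn (fun T => T \ A)
    · intro T hT
      simp only [Finset.mem_coe, Finset.mem_filter, Finset.mem_powersetCard] at hT ⊢
      refine ⟨Finset.sdiff_subset_sdiff (Finset.subset_univ T) le_rfl, ?_⟩
      rw [Finset.card_sdiff_of_subset hT.2, hT.1.2, hA]
    · intro T1 h1 T2 h2 h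
      simp only [Finset.mem_coe, Finset.mem_filter] at h1 h2
      have := congrArg (fun s => s ∪ A) h
      simpa [Finset.sdiff_union_of_subset h1.2, Finset.sdiff_union_of_subset h2.2] using this
  rwa [Finset.card_powersetCard, Finset.card_sdiff_of_subset (Finset.subset_univ A),
    Finset.card_univ, Fintype.card_fin, hA] at this

lemma aux_choose_le_two_pow (t k : ℕ) : t.choose k ≤ 2 ^ t := by
  rcases le_or_gt k t with h | h
  · calc t.choose k ≤ ∑ i ∈ Finset.range (t+1), t.choose i :=
        Finset.single_le_sum (f := fun i => t.choose i) (fun _ _ => Nat.zero_le _)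
          (Finset.mem_range.mpr (by omega))
      _ = 2 ^ t := Nat.sum_range_choose t
  · rw [Nat.choose_eq_zero_of_lt h]; exact Nat.zero_le _

/-- There exists a family `F` of `t`-element subsets of `[n]` of size at least
`(n/(4t))^(t/4)` such that any two distinct members intersect in fewer than `t/2` elements. -/
theorem stmt_0 (n t : ℕ) (ht : 0 < t) (htn : 2 * t ≤ n) :
    ∃ F : Finset (Finset (Fin n)),
      (∀ S ∈ F, S.card = t) ∧
      ((n : ℝ) / (4 * t)) ^ ((t : ℝ) / 4) ≤ (F.card : ℝ) ∧
      (∀ S ∈ F, ∀ S' ∈ F, S ≠ S' → 2 * (S ∩ S').card < t) := by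
  have htn' : t ≤ n := by omega
  set k : ℕ := (t + 1) / 2 with hkdef
  have hkt : k ≤ t := by omega
  have htk : t ≤ 2 * k := by omega
  have hkpos : 0 < k := by omega
  set 𝒜 : Finset (Finset (Fin n)) := Finset.univ.powersetCard t with hAdef
  have hA : ∀ T, T ∈ 𝒜 ↔ T.card = t := by
    intro T; simp [hAdef, Finset.mem_powersetCard]
  have hAcard : 𝒜.card = n.choose t := by
    simp [hAdef, Finset.card_powersetCard]
  set G : Finset (Finset (Finset (Fin n))) :=
    𝒜.powerset.filter (fun F => ∀ S ∈ F, ∀ S' ∈ F, S ≠ S' → 2 * (S ∩ S').card < t) with hGdef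
  have hGne : G.Nonempty := ⟨∅, by simp [hGdef]⟩
  obtain ⟨F, hFG, hFmax⟩ := G.exists_max_image Finset.card hGne
  rw [hGdef, Finset.mem_filter, Finset.mem_powerset] at hFG
  obtain ⟨hFA, hFgood⟩ := hFG
  refine ⟨F, fun S hS => (hA S).mp (hFA hS), ?_, hFgood⟩
  -- covering property from maximality
  have hcover : ∀ T ∈ 𝒜, ∃ S ∈ F, t ≤ 2 * (S ∩ T).card := by
    intro T hT
    by_contra hcon
    push_neg at hcon
    have hTF : T ∉ F := by
      intro hTF
      have := hcon T hTF
      rw [Finset.inter_self, (hA T).mp hT] at this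
      omega
    have hins : insert T F ∈ G := by
      rw [hGdef, Finset.mem_filter, Finset.mem_powerset]
      refine ⟨Finset.insert_subset hT hFA, ?_⟩
      intro S hS S' hS' hne
      rcases Finset.mem_insert.mp hS with h1 | h1
      · rcases Finset.mem_insert.mp hS' with h2 | h2
        · exact absurd (h1.trans h2.symm) hne
        · rw [h1, Finset.inter_comm]; exact hcon S' h2
      · rcases Finset.mem_insert.mp hS' with h2 | h2
        · rw [h2]; exact hcon S h1
        · exact hFgood S h1 S' h2 hne
    have := hFmax _ hins
    rw [Finset.card_insert_of_notMem hTF] at this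
    omega
  -- per-member counting
  have hcount : ∀ S ∈ F, (𝒜.filter (fun T => t ≤ 2 * (S ∩ T).card)).card
      ≤ t.choose k * (n - k).choose (t - k) := by
    intro S hS
    have hScard : S.card = t := (hA S).mp (hFA hS)
    have hsub : 𝒜.filter (fun T => t ≤ 2 * (S ∩ T).card)
        ⊆ (S.powersetCard k).biUnion (fun A => 𝒜.filter (fun T => A ⊆ T)) := by
      intro T hT
      rw [Finset.mem_filter] at hT
      obtain ⟨hTA, hst⟩ := hT
      have hk' : k ≤ (S ∩ T).card := by omega
      obtain ⟨A, hAsub, hAcardk⟩ := Finset.exists_subset_card_eq hk'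
      rw [Finset.mem_biUnion]
      exact ⟨A, Finset.mem_powersetCard.mpr ⟨hAsub.trans Finset.inter_subset_left, hAcardk⟩,
        Finset.mem_filter.mpr ⟨hTA, hAsub.trans Finset.inter_subset_right⟩⟩
    calc (𝒜.filter (fun T => t ≤ 2 * (S ∩ T).card)).card
        ≤ ((S.powersetCard k).biUnion (fun A => 𝒜.filter (fun T => A ⊆ T))).card :=
          Finset.card_le_card hsub
      _ ≤ ∑ A ∈ S.powersetCard k, (𝒜.filter (fun T => A ⊆ T)).card :=
          Finset.card_biUnion_le
      _ ≤ ∑ _A ∈ S.powersetCard k, (n - k).choose (t - k) := by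
          apply Finset.sum_le_sum
          intro A hAmem
          exact aux_supersets n t k A (Finset.mem_powersetCard.mp hAmem).2
      _ = (S.powersetCard k).card * (n - k).choose (t - k) := by
          rw [Finset.sum_const, smul_eq_mul]
      _ = t.choose k * (n - k).choose (t - k) := by
          rw [Finset.card_powersetCard, hScard]
  -- total count
  have htotal : n.choose t ≤ F.card * (t.choose k * (n - k).choose (t - k)) := by
    have hsub : 𝒜 ⊆ F.biUnion (fun S => 𝒜.filter (fun T => t ≤ 2 * (S ∩ T).card)) := by
      intro T hT
      obtain ⟨S, hSF, hST⟩ := hcover T hT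
      exact Finset.mem_biUnion.mpr ⟨S, hSF, Finset.mem_filter.mpr ⟨hT, hST⟩⟩
    calc n.choose t = 𝒜.card := hAcard.symm
      _ ≤ (F.biUnion (fun S => 𝒜.filter (fun T => t ≤ 2 * (S ∩ T).card))).card :=
          Finset.card_le_card hsub
      _ ≤ ∑ S ∈ F, (𝒜.filter (fun T => t ≤ 2 * (S ∩ T).card)).card := Finset.card_biUnion_le
      _ ≤ ∑ _S ∈ F, t.choose k * (n - k).choose (t - k) := Finset.sum_le_sum hcount
      _ = F.card * (t.choose k * (n - k).choose (t - k)) := by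
          rw [Finset.sum_const, smul_eq_mul]
  have hFpos : 0 < F.card := by
    rcases Nat.eq_zero_or_pos F.card with h | h
    · rw [h, zero_mul] at htotal
      exact absurd htotal (by simpa using (Nat.choose_pos htn').ne')
    · exact h
  -- key real bound : (n/(4t))^k ≤ F.card
  have hCpos : (0:ℝ) < ((n - k).choose (t - k) : ℝ) := by
    exact_mod_cast Nat.choose_pos (by omega)
  have hkey : ((n:ℝ) / (4 * t)) ^ k ≤ (F.card : ℝ) := by
    have h1 : ((n:ℝ)/t)^k * ((n-k).choose (t-k) : ℝ) ≤ (n.choose t : ℝ) :=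
      aux_ratio n t ht htn' k hkt
    have h2 : (n.choose t : ℝ) ≤ (F.card : ℝ) * ((t.choose k : ℝ) * ((n-k).choose (t-k) : ℝ)) := by
      exact_mod_cast htotal
    have h3 : (t.choose k : ℝ) ≤ 4 ^ k := by
      calc (t.choose k : ℝ) ≤ (2:ℝ) ^ t := by exact_mod_cast aux_choose_le_two_pow t k
        _ ≤ (2:ℝ) ^ (2*k) := by
            apply pow_le_pow_right₀ (by norm_num) htk
        _ = 4 ^ k := by rw [pow_mul]; norm_num
    have h4 : ((n:ℝ)/t)^k ≤ (F.card : ℝ) * 4 ^ k := by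
      have := h1.trans h2
      have h5 : (F.card : ℝ) * ((t.choose k : ℝ) * ((n-k).choose (t-k) : ℝ))
          ≤ (F.card : ℝ) * 4 ^ k * ((n-k).choose (t-k) : ℝ) := by
        have : (F.card : ℝ) * ((t.choose k : ℝ) * ((n-k).choose (t-k) : ℝ))
            = ((F.card : ℝ) * (t.choose k : ℝ)) * ((n-k).choose (t-k) : ℝ) := by ring
        rw [this]
        apply mul_le_mul_of_nonneg_right _ hCpos.le
        exact mul_le_mul_of_nonneg_left h3 (by positivity)
      have h6 := this.trans h5
      exact le_of_mul_le_mul_right h6 hCpos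
    have heq : ((n:ℝ) / (4 * t)) ^ k = ((n:ℝ)/t)^k / 4 ^ k := by
      rw [← div_pow, div_div, mul_comm (4:ℝ) (t:ℝ)]
    rw [heq, div_le_iff₀ (by positivity)]
    linarith [h4]
  -- final rpow manipulation
  have htpos : (0:ℝ) < (t:ℝ) := by exact_mod_cast ht
  have hbase_nonneg : (0:ℝ) ≤ (n:ℝ) / (4 * t) := by positivity
  rcases le_or_gt (4 * t) n with h4t | h4t
  · have hbase1 : (1:ℝ) ≤ (n:ℝ) / (4 * t) := by
      rw [le_div_iff₀ (by positivity), one_mul]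
      exact_mod_cast h4t
    calc ((n:ℝ) / (4 * t)) ^ ((t:ℝ)/4) ≤ ((n:ℝ) / (4 * t)) ^ ((k:ℝ)) := by
          apply Real.rpow_le_rpow_of_exponent_le hbase1
          have : (t:ℝ) ≤ 2 * k := by exact_mod_cast htk
          linarith
      _ = ((n:ℝ) / (4 * t)) ^ k := Real.rpow_natCast _ k
      _ ≤ (F.card : ℝ) := hkey
  · have hbase_le1 : (n:ℝ) / (4 * t) ≤ 1 := by
      rw [div_le_one (by positivity)]
      have : (n:ℝ) < 4 * t := by exact_mod_cast h4t
      linarith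
    calc ((n:ℝ) / (4 * t)) ^ ((t:ℝ)/4) ≤ 1 :=
          Real.rpow_le_one hbase_nonneg hbase_le1 (by positivity)
      _ ≤ (F.card : ℝ) := by exact_mod_cast hFpos
end

section
/- For every positive integer t and every δ ∈ (0,1), setting q = 2 + log₂(1/δ)/√t and C = ⌈4√t · q / log₂ q⌉, one has (e·t/C²)^C < δ. -/
/-- For `q = 2 + log₂(1/δ)/√t` and `C = ⌈4√t·q/log₂ q⌉`, one has `(e·t/C²)^C < δ`. -/
theorem stmt_6 (t : ℕ) (ht : 0 < t) (δ : ℝ) (hδ0 : 0 < δ) (hδ1 : δ < 1) :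
    (Real.exp 1 * t /
        ((⌈4 * Real.sqrt t * (2 + Real.logb 2 (1 / δ) / Real.sqrt t) /
            Real.logb 2 (2 + Real.logb 2 (1 / δ) / Real.sqrt t)⌉₊ : ℝ) ^ 2)) ^
      (⌈4 * Real.sqrt t * (2 + Real.logb 2 (1 / δ) / Real.sqrt t) /
          Real.logb 2 (2 + Real.logb 2 (1 / δ) / Real.sqrt t)⌉₊)
      < δ := by
  have ht1 : (1:ℝ) ≤ (t:ℝ) := by exact_mod_cast ht
  have ht0 : (0:ℝ) < (t:ℝ) := by linarith
  set s := Real.sqrt (t:ℝ) with hsdef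
  have hs1 : 1 ≤ s := by
    rw [hsdef, show (1:ℝ) = Real.sqrt 1 by simp]
    exact Real.sqrt_le_sqrt ht1
  have hs0 : 0 < s := lt_of_lt_of_le one_pos hs1
  have hssq : s ^ 2 = (t:ℝ) := Real.sq_sqrt (le_of_lt ht0)
  have hL0 : 0 < Real.logb 2 (1 / δ) :=
    Real.logb_pos one_lt_two (by rw [lt_div_iff₀ hδ0]; linarith)
  set L := Real.logb 2 (1 / δ) with hLdef
  set q := 2 + L / s with hqdef
  have hq2 : 2 < q := by
    have h : 0 < L / s := div_pos hL0 hs0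
    rw [hqdef]; linarith
  have hq0 : 0 < q := by linarith
  have hlog2 : 0 < Real.log 2 := Real.log_pos one_lt_two
  have hlogq2 : Real.log 2 < Real.log q := Real.log_lt_log two_pos hq2
  have hlogq0 : 0 < Real.log q := lt_trans hlog2 hlogq2
  set g := Real.logb 2 q with hgdef
  have hgeq : g = Real.log q / Real.log 2 := rfl
  have hg0 : 0 < g := by rw [hgeq]; exact div_pos hlogq0 hlog2
  set x := 4 * s * q / g with hxdef
  set C := ⌈x⌉₊ with hCdef
  have hx0 : 0 < x := by
    rw [hxdef]
    exact div_pos (mul_pos (mul_pos (by norm_num) hs0) hq0) hg0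
  have hxC : x ≤ (C:ℝ) := Nat.le_ceil x
  clear_value s L q g x C
  -- log q ≤ 2√q/e
  have hr0 : 0 < Real.sqrt q := Real.sqrt_pos.mpr hq0
  have hrsq : Real.sqrt q ^ 2 = q := Real.sq_sqrt hq0.le
  have he0 : 0 < Real.exp 1 := Real.exp_pos 1
  have hlogr : Real.log (Real.sqrt q) ≤ Real.sqrt q / Real.exp 1 := by
    have h1 : Real.log (Real.sqrt q / Real.exp 1) ≤ Real.sqrt q / Real.exp 1 - 1 :=
      Real.log_le_sub_one_of_pos (div_pos hr0 he0)
    rw [Real.log_div (ne_of_gt hr0) (ne_of_gt he0), Real.log_exp] at h1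
    linarith
  have hlogq_le' : Real.log q * Real.exp 1 ≤ 2 * Real.sqrt q := by
    have h2 := Real.log_sqrt hq0.le
    rw [h2, div_le_div_iff₀ (by norm_num) he0] at hlogr
    linarith
  have hsq' : (Real.log q)^2 * (Real.exp 1)^2 ≤ 4 * q := by
    have h := mul_le_mul hlogq_le' hlogq_le'
      (mul_nonneg hlogq0.le he0.le) (by positivity)
    nlinarith [h, hrsq]
  have he_lt : Real.exp 1 < 2.7182818286 := Real.exp_one_lt_d9
  have he_gt : (2.7182818283:ℝ) < Real.exp 1 := Real.exp_one_gt_d9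
  have hln2 : (0.6931471803:ℝ) < Real.log 2 := Real.log_two_gt_d9
  have heln2 : 1 < Real.exp 1 * Real.log 2 := by nlinarith
  have hgl : g * Real.log 2 = Real.log q := by
    rw [hgeq]; field_simp
  have hE : 1 < (Real.exp 1 * Real.log 2)^2 := one_lt_pow₀ heln2 two_ne_zero
  have hg4q : g ^ 2 < 4 * q := by
    have h2 : g^2 * (Real.exp 1 * Real.log 2)^2 ≤ 4*q := by
      have hring : g^2 * (Real.exp 1 * Real.log 2)^2
          = (g * Real.log 2)^2 * (Real.exp 1)^2 := by ring
      rw [hring, hgl]; exact hsq'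
    calc g^2 = g^2 * 1 := by ring
      _ < g^2 * (Real.exp 1 * Real.log 2)^2 :=
          mul_lt_mul_of_pos_left hE (pow_pos hg0 2)
      _ ≤ 4*q := h2
  -- C bounds
  have hC0 : (0:ℝ) < (C:ℝ) := lt_of_lt_of_le hx0 hxC
  have hxg : x * g = 4 * s * q := by
    rw [hxdef]; field_simp
  have hCg : 4 * s * q ≤ (C:ℝ) * g := hxg ▸ mul_le_mul_of_nonneg_right hxC hg0.le
  have h4sq : 0 < 4 * s * q := mul_pos (mul_pos (by norm_num) hs0) hq0
  have hCg2 : 16 * (t:ℝ) * q^2 ≤ (C:ℝ)^2 * g^2 := by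
    have e1 : (4*s*q)*(4*s*q) ≤ ((C:ℝ)*g)*((C:ℝ)*g) := mul_self_le_mul_self h4sq.le hCg
    calc 16 * (t:ℝ) * q^2 = (4*s*q)*(4*s*q) := by rw [← hssq]; ring
      _ ≤ ((C:ℝ)*g)*((C:ℝ)*g) := e1
      _ = (C:ℝ)^2 * g^2 := by ring
  have h1 : Real.exp 1 * g^2 < 16 * q := by
    have he4 : Real.exp 1 < 4 := by linarith
    have ha1 : Real.exp 1 * g^2 < 4 * g^2 := mul_lt_mul_of_pos_right he4 (pow_pos hg0 2)
    linarith
  have hCq : q * (Real.exp 1 * (t:ℝ)) * g^2 < (C:ℝ)^2 * g^2 := by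
    have hqt : 0 < q * (t:ℝ) := mul_pos hq0 ht0
    calc q * (Real.exp 1 * (t:ℝ)) * g^2 = (q*(t:ℝ)) * (Real.exp 1 * g^2) := by ring
      _ < (q*(t:ℝ)) * (16*q) := mul_lt_mul_of_pos_left h1 hqt
      _ = 16 * (t:ℝ) * q^2 := by ring
      _ ≤ (C:ℝ)^2 * g^2 := hCg2
  have hCq' : q * (Real.exp 1 * (t:ℝ)) < (C:ℝ)^2 :=
    lt_of_mul_lt_mul_right hCq (by positivity)
  -- A
  have het : 0 < Real.exp 1 * (t:ℝ) := mul_pos he0 ht0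
  set A := (C:ℝ)^2 / (Real.exp 1 * (t:ℝ)) with hAdef
  have hAq : q < A := by
    rw [hAdef, lt_div_iff₀ het]
    exact hCq'
  have hA1 : 1 < A := lt_trans (by linarith) hAq
  have hA0 : 0 < A := lt_trans one_pos hA1
  have hlogA : Real.log q < Real.log A := Real.log_lt_log hq0 hAq
  have hlogA0 : 0 < Real.log A := Real.log_pos hA1
  have hxlq : x * Real.log q = 4 * s * q * Real.log 2 := by
    rw [hxdef, hgeq]; field_simp
  have hLl : L * Real.log 2 = Real.log (1 / δ) := by
    rw [hLdef, Real.logb]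
    exact div_mul_cancel₀ _ hlog2.ne'
  have hLs : (q - 2) * s = L := by
    rw [hqdef]
    field_simp
    ring
  have hkey : Real.log (1 / δ) < (C:ℝ) * Real.log A := by
    have h2 : Real.log (1 / δ) < x * Real.log q := by
      rw [← hLl, hxlq]
      have hq4 : L < 4 * s * q := by
        have hqq : q - 2 < 4 * q := by linarith
        calc L = (q-2)*s := hLs.symm
          _ < (4*q)*s := mul_lt_mul_of_pos_right hqq hs0
          _ = 4*s*q := by ring
      exact mul_lt_mul_of_pos_right hq4 hlog2
    have h3 : x * Real.log q < (C:ℝ) * Real.log A := by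
      have a1 : x * Real.log q < x * Real.log A := mul_lt_mul_of_pos_left hlogA hx0
      have a2 : x * Real.log A ≤ (C:ℝ) * Real.log A :=
        mul_le_mul_of_nonneg_right hxC hlogA0.le
      linarith
    linarith
  -- finish
  have ha : Real.exp 1 * (t:ℝ) / (C:ℝ)^2 = A⁻¹ := by
    rw [hAdef, inv_div]
  rw [ha]
  have hstep : A⁻¹ ^ C = Real.exp (Real.log A⁻¹ * (C:ℝ)) := by
    rw [← Real.rpow_natCast A⁻¹ C, Real.rpow_def_of_pos (inv_pos.mpr hA0)]
  rw [hstep, ← Real.exp_log hδ0]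
  apply Real.exp_lt_exp.mpr
  have hld : Real.log δ = -Real.log (1 / δ) := by
    rw [one_div, Real.log_inv]; ring
  rw [Real.log_inv, hld]
  linarith [hkey]
end

section
/- The Misra–Gries algorithm with capacity C, run on a stream of N items, maintains a list L of at most C items with counters A(u) > 0 for u ∈ L such that at the end, for every item u: 0 ≤ f(u) − A(u) ≤ N/(C+1), where f(u) is the true frequency of u and A(u) = 0 for u ∉ L. -/
/-- One step of the Misra–Gries algorithm with capacity `C`: increment the counter of the
arriving item; if more than `C` counters are then positive, decrement all counters by one. -/
def mgStep {α : Type*} [Fintype α] [DecidableEq α] (C : ℕ) (A : α → ℕ) (u : α) : α → ℕ :=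
  let A' := Function.update A u (A u + 1)
  if (Finset.univ.filter fun x => 0 < A' x).card ≤ C then A' else fun x => A' x - 1

section aux
variable {α : Type*} [Fintype α] [DecidableEq α]

private def mgPos (A : α → ℕ) : Finset α := Finset.univ.filter fun x => 0 < A x

private def mgSum (A : α → ℕ) : ℕ := ∑ x, A x

private lemma mg_step_lemma (C : ℕ) (A : α → ℕ) (u : α) (h : (mgPos A).card ≤ C) :
    (mgPos (mgStep C A u)).card ≤ C ∧
    (∀ v, mgStep C A u v ≤ Function.update A u (A u + 1) v) ∧
    (∀ v, ((C : ℤ) + 1) * ((Function.update A u (A u + 1) v : ℤ) - mgStep C A u v)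
      ≤ (mgSum A + 1 : ℤ) - mgSum (mgStep C A u)) := by
  set A' := Function.update A u (A u + 1) with hA'
  have hAu : ∀ v, A' v = A v + (if v = u then 1 else 0) := by
    intro v
    by_cases hv : v = u
    · subst hv; simp [hA']
    · simp [hA', Function.update_of_ne hv, hv]
  have hsum : mgSum A' = mgSum A + 1 := by
    unfold mgSum
    rw [Finset.sum_congr rfl (fun v _ => hAu v), Finset.sum_add_distrib]
    simp
  by_cases hc : (Finset.univ.filter fun x => 0 < A' x).card ≤ C
  · have hB : mgStep C A u = A' := by
      rw [mgStep]; simp only [← hA']; rw [if_pos hc]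
    rw [hB]
    refine ⟨hc, fun v => le_refl _, fun v => ?_⟩
    rw [hsum]; push_cast; ring_nf; omega
  · have hB : mgStep C A u = fun x => A' x - 1 := by
      rw [mgStep]; simp only [← hA']; rw [if_neg hc]
    rw [hB]
    -- A u = 0 in this case
    have hAu0 : A u = 0 := by
      by_contra h0
      apply hc
      have : (Finset.univ.filter fun x => 0 < A' x) = mgPos A := by
        apply Finset.filter_congr
        intro x _
        by_cases hx : x = u
        · subst hx; simp [hA', mgPos]; omega
        · simp [hA', Function.update_of_ne hx]
      rw [this]; exact h
    have hcard : C + 1 ≤ (Finset.univ.filter fun x => 0 < A' x).card := by omega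
    -- sum identity: mgSum A' = mgSum (fun x => A' x - 1) + card pos A'
    have hsum2 : mgSum A' = mgSum (fun x => A' x - 1) + (Finset.univ.filter fun x => 0 < A' x).card := by
      unfold mgSum
      rw [Finset.card_filter, ← Finset.sum_add_distrib]
      apply Finset.sum_congr rfl
      intro x _
      by_cases hx : 0 < A' x <;> simp [hx] <;> omega
    constructor
    · -- positive counters of the decremented map are ⊆ mgPos A
      have hsub : mgPos (fun x => A' x - 1) ⊆ mgPos A := by
        intro x hx
        simp only [mgPos, Finset.mem_filter, Finset.mem_univ, true_and] at hx ⊢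
        by_cases hxu : x = u
        · subst hxu; simp [hA', hAu0] at hx
        · rw [hAu x] at hx; simp [hxu] at hx; omega
      exact le_trans (Finset.card_le_card hsub) h
    constructor
    · intro v; exact Nat.sub_le _ _
    · intro v
      have h1 : (A' v : ℤ) - ((A' v - 1 : ℕ) : ℤ) ≤ 1 := by omega
      have h2 : (mgSum A + 1 : ℤ) - mgSum (fun x => A' x - 1) = (Finset.univ.filter fun x => 0 < A' x).card := by
        have := hsum2
        rw [hsum] at this
        omega
      rw [h2]
      have : ((C : ℤ) + 1) ≤ ((Finset.univ.filter fun x => 0 < A' x).card : ℤ) := by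
        exact_mod_cast hcard
      nlinarith [h1, this]

private lemma mg_fold_lemma (C : ℕ) (s : List α) :
    ∀ A : α → ℕ, (mgPos A).card ≤ C →
    (mgPos (s.foldl (mgStep C) A)).card ≤ C ∧
    (∀ v, s.foldl (mgStep C) A v ≤ A v + s.count v) ∧
    (∀ v, ((C : ℤ) + 1) * (((A v + s.count v : ℕ) : ℤ) - s.foldl (mgStep C) A v)
      ≤ ((mgSum A + s.length : ℕ) : ℤ) - mgSum (s.foldl (mgStep C) A)) := by
  induction s with
  | nil =>
    intro A hA
    refine ⟨hA, fun v => by simp, fun v => by simp⟩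
  | cons u t ih =>
    intro A hA
    obtain ⟨h1, h2, h3⟩ := mg_step_lemma C A u hA
    set B := mgStep C A u with hB
    obtain ⟨g1, g2, g3⟩ := ih B h1
    have hfold : (u :: t).foldl (mgStep C) A = t.foldl (mgStep C) B := rfl
    rw [hfold]
    have hcount : ∀ v : α, (u :: t).count v = t.count v + (if v = u then 1 else 0) := by
      intro v
      rw [List.count_cons]
      by_cases hv : v = u
      · subst hv; simp
      · simp [hv, Ne.symm hv]
    have hupd : ∀ v : α, Function.update A u (A u + 1) v = A v + (if v = u then 1 else 0) := by
      intro v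
      by_cases hv : v = u
      · subst hv; simp
      · simp [Function.update_of_ne hv, hv]
    refine ⟨g1, fun v => ?_, fun v => ?_⟩
    · have := h2 v
      rw [hupd v] at this
      have := g2 v
      rw [hcount v]
      omega
    · have s1 := h3 v
      rw [hupd v] at s1
      have s2 := g3 v
      rw [hcount v]
      have : (u :: t).length = t.length + 1 := rfl
      rw [this]
      push_cast at s1 s2 ⊢
      by_cases hv : v = u
      · subst hv
        simp at s1 ⊢
        linarith
      · simp [hv] at s1 ⊢
        linarith
end aux

/-- The Misra–Gries algorithm with capacity `C` on a stream of `N` items maintains at most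
`C` positive counters, and every item `u` satisfies `0 ≤ f(u) − A(u) ≤ N/(C+1)`. -/
theorem stmt_10 {α : Type*} [Fintype α] [DecidableEq α] (C : ℕ) (hC : 0 < C)
    (s : List α) :
    (Finset.univ.filter fun x => 0 < s.foldl (mgStep C) (fun _ => 0) x).card ≤ C ∧
    ∀ u : α, s.foldl (mgStep C) (fun _ => 0) u ≤ s.count u ∧
      ((s.count u : ℝ) - s.foldl (mgStep C) (fun _ => 0) u)
        ≤ (s.length : ℝ) / (C + 1) := by
  have h0 : (mgPos (fun _ : α => 0)).card ≤ C := by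
    simp [mgPos]
  obtain ⟨h1, h2, h3⟩ := mg_fold_lemma C s (fun _ => 0) h0
  refine ⟨h1, fun u => ⟨by simpa using h2 u, ?_⟩⟩
  have s3 := h3 u
  have hsum0 : mgSum (fun _ : α => 0) = 0 := by simp [mgSum]
  rw [hsum0] at s3
  push_cast at s3
  have hF : (0 : ℤ) ≤ mgSum (s.foldl (mgStep C) (fun _ => 0)) := by positivity
  have key : ((C : ℤ) + 1) * ((s.count u : ℤ) - s.foldl (mgStep C) (fun _ => 0) u) ≤ s.length := by
    linarith
  rw [le_div_iff₀ (by positivity)]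
  have : (((C : ℤ) + 1) * ((s.count u : ℤ) - s.foldl (mgStep C) (fun _ => 0) u) : ℝ) ≤ ((s.length : ℤ) : ℝ) := by
    exact_mod_cast key
  push_cast at this
  linarith
end

section
/- In the Misra–Gries algorithm with capacity C, every decrement event (triggered when the list would exceed size C) reduces the total of all counters by C+1, hence the number of decrement events after processing N items is at most N/(C+1), and consequently f(u) − A(u) ≤ N/(C+1) for every item u. -/
/-- One step of Misra–Gries with capacity `C`, also tracking the number of decrement events. -/
def mgStepD {α : Type*} [Fintype α] [DecidableEq α] (C : ℕ) (st : (α → ℕ) × ℕ) (u : α) :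
    (α → ℕ) × ℕ :=
  let A' := Function.update st.1 u (st.1 u + 1)
  if (Finset.univ.filter fun x => 0 < A' x).card ≤ C then (A', st.2)
  else (fun x => A' x - 1, st.2 + 1)

section aux
variable {α : Type*} [Fintype α] [DecidableEq α]

lemma mg_step_main (C : ℕ) (st : (α → ℕ) × ℕ) (a : α)
    (h : (Finset.univ.filter fun x => 0 < st.1 x).card ≤ C) :
    ((Finset.univ.filter fun x => 0 < (mgStepD C st a).1 x).card ≤ C) ∧
    (∑ x, (mgStepD C st a).1 x) + (C + 1) * (mgStepD C st a).2
      = (∑ x, st.1 x) + (C + 1) * st.2 + 1 ∧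
    ∀ u, st.1 u + (if u = a then 1 else 0) + st.2
      ≤ (mgStepD C st a).1 u + (mgStepD C st a).2 := by
  set A' := Function.update st.1 a (st.1 a + 1) with hA'
  have hAu : ∀ x, A' x = if x = a then st.1 a + 1 else st.1 x := by
    intro x
    by_cases hx : x = a <;> simp [hA', Function.update, hx]
  have hsumA' : (∑ x, A' x) = (∑ x, st.1 x) + 1 := by
    have : (∑ x, A' x) = ∑ x, (st.1 x + if x = a then 1 else 0) := by
      apply Finset.sum_congr rfl
      intro x _
      rw [hAu x]
      by_cases hx : x = a <;> simp [hx]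
    rw [this, Finset.sum_add_distrib, Finset.sum_ite_eq' Finset.univ a (fun _ => 1)]
    simp
  by_cases hc : (Finset.univ.filter fun x => 0 < A' x).card ≤ C
  · have hstep : mgStepD C st a = (A', st.2) := by
      rw [mgStepD]; simp only [← hA']; rw [if_pos hc]
    rw [hstep]
    refine ⟨hc, by simp only; rw [hsumA']; ring, ?_⟩
    intro u
    simp only
    rw [hAu u]
    by_cases hu : u = a <;> simp [hu]
  · have hstep : mgStepD C st a = (fun x => A' x - 1, st.2 + 1) := by
      rw [mgStepD]; simp only [← hA']; rw [if_neg hc]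
    rw [hstep]
    -- card of positives of A' is exactly C+1
    have hsub : (Finset.univ.filter fun x => 0 < A' x)
        ⊆ insert a (Finset.univ.filter fun x => 0 < st.1 x) := by
      intro x hx
      simp only [Finset.mem_filter, Finset.mem_univ, true_and] at hx
      by_cases hxa : x = a
      · simp [hxa]
      · rw [hAu x, if_neg hxa] at hx
        simp [Finset.mem_insert, hx]
    have hcard : (Finset.univ.filter fun x => 0 < A' x).card = C + 1 := by
      have h1 := Finset.card_le_card hsub
      have h2 := Finset.card_insert_le a (Finset.univ.filter fun x => 0 < st.1 x)
      omega
    -- sum of decremented counters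
    have hsum2 : (∑ x, (A' x - 1)) + (C + 1) = ∑ x, A' x := by
      have : ∀ x : α, (A' x - 1) + (if 0 < A' x then 1 else 0) = A' x := by
        intro x; by_cases hx : 0 < A' x <;> simp [hx] <;> omega
      calc (∑ x, (A' x - 1)) + (C + 1)
          = (∑ x, (A' x - 1)) + (Finset.univ.filter fun x => 0 < A' x).card := by rw [hcard]
        _ = (∑ x, (A' x - 1)) + (∑ x, if 0 < A' x then 1 else 0) := by
            rw [Finset.card_filter]
        _ = ∑ x, ((A' x - 1) + if 0 < A' x then 1 else 0) := by
            rw [Finset.sum_add_distrib]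
        _ = ∑ x, A' x := by exact Finset.sum_congr rfl fun x _ => this x
    refine ⟨?_, ?_, ?_⟩
    · -- positives shrink into positives of st.1
      apply le_trans (Finset.card_le_card ?_) h
      intro x hx
      simp only [Finset.mem_filter, Finset.mem_univ, true_and] at hx ⊢
      rw [hAu x] at hx
      by_cases hxa : x = a
      · subst hxa; simp at hx ⊢; omega
      · simp [hxa] at hx ⊢; omega
    · simp only
      rw [Nat.mul_add, Nat.mul_one]
      omega
    · intro u
      simp only
      have := hAu u
      by_cases hu : u = a
      · subst hu; simp at this ⊢; omega
      · simp [hu] at this ⊢; omega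
end aux

/-- Each decrement event reduces the total of all counters by `C+1`, hence the number of
decrement events is at most `N/(C+1)`, and consequently `f(u) − A(u) ≤ N/(C+1)`. -/
theorem stmt_11 {α : Type*} [Fintype α] [DecidableEq α] (C : ℕ) (hC : 0 < C)
    (s : List α) :
    (∑ x : α, (s.foldl (mgStepD C) (fun _ => 0, 0)).1 x)
        + (C + 1) * (s.foldl (mgStepD C) (fun _ => 0, 0)).2 = s.length ∧
    (C + 1) * (s.foldl (mgStepD C) (fun _ => 0, 0)).2 ≤ s.length ∧
    (∀ u : α, s.count u - (s.foldl (mgStepD C) (fun _ => 0, 0)).1 u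
        ≤ (s.foldl (mgStepD C) (fun _ => 0, 0)).2) ∧
    (∀ u : α, ((s.count u : ℝ) - (s.foldl (mgStepD C) (fun _ => 0, 0)).1 u)
        ≤ (s.length : ℝ) / (C + 1)) := by
  -- general fold lemma
  have main : ∀ (l : List α) (st : (α → ℕ) × ℕ),
      (Finset.univ.filter fun x => 0 < st.1 x).card ≤ C →
      ((Finset.univ.filter fun x => 0 < (l.foldl (mgStepD C) st).1 x).card ≤ C) ∧
      (∑ x, (l.foldl (mgStepD C) st).1 x) + (C + 1) * (l.foldl (mgStepD C) st).2
        = (∑ x, st.1 x) + (C + 1) * st.2 + l.length ∧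
      ∀ u, st.1 u + l.count u + st.2
        ≤ (l.foldl (mgStepD C) st).1 u + (l.foldl (mgStepD C) st).2 := by
    intro l
    induction l with
    | nil => intro st h; refine ⟨h, ?_, ?_⟩ <;> simp
    | cons a t ih =>
      intro st h
      obtain ⟨h1, h2, h3⟩ := mg_step_main C st a h
      obtain ⟨g1, g2, g3⟩ := ih (mgStepD C st a) h1
      refine ⟨by exact g1, ?_, ?_⟩
      · simp only [List.foldl_cons, List.length_cons] at *
        omega
      · intro u
        have g := g3 u
        have hh := h3 u
        simp only [List.foldl_cons, List.count_cons] at g hh ⊢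
        by_cases hu : u = a
        · subst hu; simp at g hh ⊢; omega
        · simp [hu, Ne.symm hu] at g hh ⊢; omega
  have h0 : (Finset.univ.filter fun x => 0 < ((fun _ : α => 0, 0) : (α → ℕ) × ℕ).1 x).card ≤ C := by
    simp
  obtain ⟨h1, h2, h3⟩ := main s (fun _ => 0, 0)
    (by simp)
  simp only [Finset.sum_const_zero, Nat.mul_zero, Nat.add_zero, Nat.zero_add] at h2 h3
  set res := s.foldl (mgStepD C) (fun _ => 0, 0) with hres
  refine ⟨h2, by omega, fun u => by have := h3 u; omega, ?_⟩
  intro u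
  have hd : (res.2 : ℝ) ≤ (s.length : ℝ) / (C + 1) := by
    rw [le_div_iff₀ (by positivity)]
    have : (C + 1) * res.2 ≤ s.length := by omega
    push_cast
    calc (res.2 : ℝ) * (C + 1) = ((C + 1) * res.2 : ℕ) := by push_cast; ring
      _ ≤ (s.length : ℝ) := by exact_mod_cast this
  have hu := h3 u
  have : (s.count u : ℝ) - res.1 u ≤ (res.2 : ℝ) := by
    have : (s.count u : ℕ) ≤ res.1 u + res.2 := by omega
    have := (Nat.cast_le (α := ℝ)).mpr this
    push_cast at this
    linarith
  linarith
end
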